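/- Let μ_1 ≥ ... ≥ μ_{n-1} ≥ 0 and ν_1 ≥ ... ≥ ν_{n-1} ≥ 0 be nonnegative reals, and let c_k and d_k denote the k-th elementary symmetric polynomials of the μ's and ν's respectively. If c_k ≤ d_k for all k = 1,...,n-1, then ∑_{i=1}^{n-1} √μ_i ≤ ∑_{i=1}^{n-1} √ν_i. -/

import Mathlib

open Finset

open Real MeasureTheory Filter Set in
private theorem sqrt_integral_aux (a : ℝ) (ha : 0 ≤ a) :
    MeasureTheory.IntegrableOn (fun t => Real.log (1 + a * t ^ 2) / t ^ 2) (Set.Ioi (0:ℝ)) ∧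
    ∫ t in Set.Ioi (0:ℝ), Real.log (1 + a * t ^ 2) / t ^ 2 = Real.pi * Real.sqrt a := by
  rcases eq_or_lt_of_le ha with rfl | ha
  · constructor
    · simpa using integrableOn_zero (s := Set.Ioi (0:ℝ)) (μ := volume)
    · simp
  set g : ℝ → ℝ := fun t => 2 * Real.sqrt a * Real.arctan (Real.sqrt a * t)
      - Real.log (1 + a * t ^ 2) / t with hg
  have hsq : Real.sqrt a ^ 2 = a := Real.sq_sqrt ha.le
  have hsa : 0 < Real.sqrt a := Real.sqrt_pos.mpr ha
  have hpos : ∀ t : ℝ, (0:ℝ) < 1 + a * t ^ 2 := fun t => by positivity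
  have hderiv : ∀ t ∈ Set.Ioi (0:ℝ), HasDerivAt g (Real.log (1 + a * t ^ 2) / t ^ 2) t := by
    intro t ht
    have ht0 : t ≠ 0 := ne_of_gt ht
    have h1 : HasDerivAt (fun t : ℝ => Real.arctan (Real.sqrt a * t))
        ((1 / (1 + (Real.sqrt a * t) ^ 2)) * Real.sqrt a) t := by
      have := (Real.hasDerivAt_arctan (Real.sqrt a * t)).comp t
        ((hasDerivAt_id t).const_mul (Real.sqrt a))
      simpa [Function.comp_def] using this
    have h2 : HasDerivAt (fun t : ℝ => 1 + a * t ^ 2) (a * (2 * t)) t := by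
      simpa using ((hasDerivAt_pow 2 t).const_mul a).const_add 1
    have h3 : HasDerivAt (fun t : ℝ => Real.log (1 + a * t ^ 2))
        (a * (2 * t) / (1 + a * t ^ 2)) t := by
      have := (Real.hasDerivAt_log (ne_of_gt (hpos t))).comp t h2
      simpa [Function.comp_def, div_eq_inv_mul] using this
    have h4 : HasDerivAt (fun t : ℝ => Real.log (1 + a * t ^ 2) / t)
        ((a * (2 * t) / (1 + a * t ^ 2) * t - Real.log (1 + a * t ^ 2) * 1) / t ^ 2) t :=
      h3.div (hasDerivAt_id t) ht0
    have h5 := (h1.const_mul (2 * Real.sqrt a)).sub h4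
    convert h5 using 1
    · rfl
    · rfl
    · rfl
    have h6 : (Real.sqrt a * t) ^ 2 = a * t ^ 2 := by rw [mul_pow, hsq]
    rw [h6]
    field_simp
    ring_nf
    rw [hsq]
    ring
  have g'pos : ∀ t ∈ Set.Ioi (0:ℝ), 0 ≤ Real.log (1 + a * t ^ 2) / t ^ 2 := by
    intro t _
    apply div_nonneg _ (sq_nonneg t)
    apply Real.log_nonneg
    nlinarith [sq_nonneg t, ha.le]
  have hlog_le : ∀ t : ℝ, Real.log (1 + a * t ^ 2) ≤ a * t ^ 2 := by
    intro t
    have := Real.log_le_sub_one_of_pos (hpos t)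
    linarith
  have hlog_nonneg : ∀ t : ℝ, 0 ≤ Real.log (1 + a * t ^ 2) := by
    intro t
    apply Real.log_nonneg; nlinarith [sq_nonneg t, ha.le]
  have htend0 : Tendsto (fun t : ℝ => Real.log (1 + a * t ^ 2) / t)
      (nhdsWithin 0 (Set.Ici 0)) (nhds 0) := by
    apply squeeze_zero' (g := fun t : ℝ => a * t)
    · filter_upwards [self_mem_nhdsWithin] with t (ht : (0:ℝ) ≤ t)
      exact div_nonneg (hlog_nonneg t) ht
    · filter_upwards [self_mem_nhdsWithin] with t (ht : (0:ℝ) ≤ t)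
      rcases eq_or_lt_of_le ht with rfl | ht'
      · simp
      · rw [div_le_iff₀ ht']
        calc Real.log (1 + a * t ^ 2) ≤ a * t ^ 2 := hlog_le t
        _ = a * t * t := by ring
    · have : Tendsto (fun t : ℝ => a * t) (nhdsWithin 0 (Set.Ici 0)) (nhds (a * 0)) :=
        ((continuous_const.mul continuous_id).tendsto 0).mono_left nhdsWithin_le_nhds
      simpa using this
  have hcont : ContinuousWithinAt g (Set.Ici 0) 0 := by
    have h1 : ContinuousWithinAt
        (fun t : ℝ => 2 * Real.sqrt a * Real.arctan (Real.sqrt a * t)) (Set.Ici 0) 0 :=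
      (continuous_const.mul
        (Real.continuous_arctan.comp (continuous_const.mul continuous_id))).continuousWithinAt
    have h2 : ContinuousWithinAt (fun t : ℝ => Real.log (1 + a * t ^ 2) / t) (Set.Ici 0) 0 := by
      rw [ContinuousWithinAt]
      convert htend0 using 2
      simp
    exact h1.sub h2
  have htop1 : Tendsto (fun t : ℝ => 2 * Real.sqrt a * Real.arctan (Real.sqrt a * t)) atTop
      (nhds (2 * Real.sqrt a * (Real.pi / 2))) := by
    apply Tendsto.const_mul
    have hat : Tendsto (fun t : ℝ => Real.sqrt a * t) atTop atTop :=
      Tendsto.const_mul_atTop hsa tendsto_id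
    exact (Real.tendsto_arctan_atTop.mono_right nhdsWithin_le_nhds).comp hat
  have htop2 : Tendsto (fun t : ℝ => Real.log (1 + a * t ^ 2) / t) atTop (nhds 0) := by
    have hlit : (fun t : ℝ => Real.log (1 + Real.sqrt a * t)) =o[atTop] (fun t : ℝ => t) := by
      have h1 : Tendsto (fun t : ℝ => 1 + Real.sqrt a * t) atTop atTop :=
        tendsto_atTop_add_const_left atTop 1 (Tendsto.const_mul_atTop hsa tendsto_id)
      have h2 := Real.isLittleO_log_id_atTop.comp_tendsto h1
      refine h2.trans_isBigO ?_
      apply Asymptotics.IsBigO.of_bound (1 + Real.sqrt a)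
      filter_upwards [eventually_ge_atTop (1:ℝ)] with t ht
      have ht0 : 0 ≤ t := le_trans zero_le_one ht
      simp only [Function.comp_def, id_eq, Real.norm_eq_abs]
      rw [abs_of_nonneg (by nlinarith [hsa.le]), abs_of_nonneg ht0]
      nlinarith [hsa.le]
    have h3 : Tendsto (fun t : ℝ => Real.log (1 + Real.sqrt a * t) / t) atTop (nhds 0) :=
      hlit.tendsto_div_nhds_zero
    apply squeeze_zero' (g := fun t : ℝ => 2 * (Real.log (1 + Real.sqrt a * t) / t))
    · filter_upwards [eventually_ge_atTop (0:ℝ)] with t ht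
      exact div_nonneg (hlog_nonneg t) ht
    · filter_upwards [eventually_ge_atTop (0:ℝ)] with t ht
      have hb : 1 + a * t ^ 2 ≤ (1 + Real.sqrt a * t) ^ 2 := by
        nlinarith [mul_nonneg hsa.le ht, hsq]
      have hlog : Real.log (1 + a * t ^ 2) ≤ 2 * Real.log (1 + Real.sqrt a * t) := by
        calc Real.log (1 + a * t ^ 2) ≤ Real.log ((1 + Real.sqrt a * t) ^ 2) :=
              Real.log_le_log (hpos t) hb
        _ = 2 * Real.log (1 + Real.sqrt a * t) := by
              rw [Real.log_pow]; push_cast; ring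
      rcases eq_or_lt_of_le ht with rfl | ht'
      · simp
      · rw [div_le_iff₀ ht']
        have heq : 2 * (Real.log (1 + Real.sqrt a * t) / t) * t
            = 2 * Real.log (1 + Real.sqrt a * t) := by field_simp
        rw [heq]; exact hlog
    · simpa using h3.const_mul 2
  have htop : Tendsto g atTop (nhds (Real.pi * Real.sqrt a)) := by
    have := htop1.sub htop2
    simp only [sub_zero] at this
    convert this using 2
    ring
  have hg0 : g 0 = 0 := by simp [hg]
  constructor
  · exact integrableOn_Ioi_deriv_of_nonneg hcont hderiv g'pos htop
  · rw [integral_Ioi_of_hasDerivAt_of_nonneg hcont hderiv g'pos htop, hg0, sub_zero]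

private theorem prod_one_add_le_aux {m : ℕ} (μ ν : Fin m → ℝ)
    (hc : ∀ k, 1 ≤ k → k ≤ m →
      (∑ I ∈ Finset.univ.powersetCard k, ∏ i ∈ I, μ i) ≤
      (∑ I ∈ Finset.univ.powersetCard k, ∏ i ∈ I, ν i))
    (x : ℝ) (hx : 0 ≤ x) :
    ∏ i, (1 + μ i * x) ≤ ∏ i, (1 + ν i * x) := by
  have expand : ∀ f : Fin m → ℝ, ∏ i, (1 + f i * x)
      = ∑ k ∈ Finset.range (m + 1), x ^ k * ∑ I ∈ Finset.univ.powersetCard k, ∏ i ∈ I, f i := by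
    intro f
    have h1 := Finset.prod_add (fun i => f i * x) (fun _ => 1) (Finset.univ : Finset (Fin m))
    simp only [Finset.prod_const_one, mul_one] at h1
    calc ∏ i, (1 + f i * x) = ∏ i, (f i * x + 1) := by
          apply Finset.prod_congr rfl; intros; ring
    _ = ∑ I ∈ Finset.univ.powerset, ∏ i ∈ I, (f i * x) := h1
    _ = ∑ k ∈ Finset.range ((Finset.univ : Finset (Fin m)).card + 1),
          ∑ I ∈ Finset.univ.powersetCard k, ∏ i ∈ I, (f i * x) := Finset.sum_powerset _ _
    _ = ∑ k ∈ Finset.range (m + 1), x ^ k * ∑ I ∈ Finset.univ.powersetCard k, ∏ i ∈ I, f i := by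
          rw [Finset.card_univ, Fintype.card_fin]
          refine Finset.sum_congr rfl fun k _ => ?_
          rw [Finset.mul_sum]
          refine Finset.sum_congr rfl fun I hI => ?_
          rw [Finset.prod_mul_distrib, Finset.prod_const,
            (Finset.mem_powersetCard.mp hI).2, mul_comm]
  rw [expand μ, expand ν]
  refine Finset.sum_le_sum fun k hk => ?_
  rcases Nat.eq_zero_or_pos k with rfl | hk1
  · simp
  · have hkm : k ≤ m := Nat.lt_succ_iff.mp (Finset.mem_range.mp hk)
    exact mul_le_mul_of_nonneg_left (hc k hk1 hkm) (pow_nonneg hx k)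

theorem sum_sqrt_mono_of_esymm_le (n : ℕ) (μ ν : Fin (n - 1) → ℝ)
    (hμa : Antitone μ) (hνa : Antitone ν) (hμ : ∀ i, 0 ≤ μ i) (hν : ∀ i, 0 ≤ ν i)
    (hc : ∀ k, 1 ≤ k → k ≤ n - 1 →
      (∑ I ∈ Finset.univ.powersetCard k, ∏ i ∈ I, μ i) ≤
      (∑ I ∈ Finset.univ.powersetCard k, ∏ i ∈ I, ν i)) :
    ∑ i : Fin (n - 1), Real.sqrt (μ i) ≤ ∑ i : Fin (n - 1), Real.sqrt (ν i) := by
  have key : ∀ f : Fin (n - 1) → ℝ, (∀ i, 0 ≤ f i) →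
      MeasureTheory.IntegrableOn
        (fun t => ∑ i, Real.log (1 + f i * t ^ 2) / t ^ 2) (Set.Ioi (0:ℝ)) ∧
      (∫ t in Set.Ioi (0:ℝ), ∑ i, Real.log (1 + f i * t ^ 2) / t ^ 2)
        = Real.pi * ∑ i, Real.sqrt (f i) := by
    intro f hf
    constructor
    · exact MeasureTheory.integrable_finset_sum _ fun i _ => (sqrt_integral_aux (f i) (hf i)).1
    · rw [MeasureTheory.integral_finset_sum _ fun i _ => (sqrt_integral_aux (f i) (hf i)).1,
        Finset.mul_sum]
      exact Finset.sum_congr rfl fun i _ => (sqrt_integral_aux (f i) (hf i)).2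
  have hmono : (∫ t in Set.Ioi (0:ℝ), ∑ i, Real.log (1 + μ i * t ^ 2) / t ^ 2)
      ≤ ∫ t in Set.Ioi (0:ℝ), ∑ i, Real.log (1 + ν i * t ^ 2) / t ^ 2 := by
    refine MeasureTheory.setIntegral_mono_on (key μ hμ).1 (key ν hν).1 measurableSet_Ioi ?_
    intro t ht
    have ht' : (0:ℝ) < t := ht
    have ht2 : (0:ℝ) < t ^ 2 := by positivity
    have hposμ : ∀ i, (0:ℝ) < 1 + μ i * t ^ 2 := fun i => by nlinarith [hμ i]
    have hposν : ∀ i, (0:ℝ) < 1 + ν i * t ^ 2 := fun i => by nlinarith [hν i]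
    have hlμ : ∑ i, Real.log (1 + μ i * t ^ 2) / t ^ 2
        = Real.log (∏ i, (1 + μ i * t ^ 2)) / t ^ 2 := by
      rw [← Finset.sum_div, ← Real.log_prod fun i _ => ne_of_gt (hposμ i)]
    have hlν : ∑ i, Real.log (1 + ν i * t ^ 2) / t ^ 2
        = Real.log (∏ i, (1 + ν i * t ^ 2)) / t ^ 2 := by
      rw [← Finset.sum_div, ← Real.log_prod fun i _ => ne_of_gt (hposν i)]
    rw [hlμ, hlν]
    apply div_le_div_of_nonneg_right ?_ ht2.le
    · exact Real.log_le_log (Finset.prod_pos fun i _ => hposμ i)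
        (prod_one_add_le_aux μ ν hc (t ^ 2) ht2.le)
  rw [(key μ hμ).2, (key ν hν).2] at hmono
  exact le_of_mul_le_mul_left hmono Real.pi_pos
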